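/- Let T > 0, L > 0, R > 0, c > 0, λ ∈ ℝ, 0 < μ < 1, and set α = 1 − μ. Let f, g : [0,T] → ℝ be measurable with 1/L ≤ f(t) ≤ g(t) for almost every t ∈ [0,T]; assume f, f^α, (g/f)^{α/μ} and ((L f)^μ R^{−λ})^{α/μ} are integrable on [0,T], and assume (1/T)∫₀ᵀ f ≤ c·L^{−1}·R^{λ}. Then the set {t ∈ [0,T] : c·g(t)/f(t) ≥ (L·f(t))^{μ}·R^{−λ}} has positive Lebesgue measure. -/

import Mathlib

open MeasureTheory

/-- existence of `good intervals`: under the hypotheses of Theorem 4.1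
of the paper, the set of times in `[0,T]` where `c·g/f ≥ (L f)^μ R^(-λ)` has
positive Lebesgue measure. -/
theorem good_times_have_positive_measure
    (T L R c lam : ℝ) (hT : 0 < T) (hL : 0 < L) (hR : 0 < R) (hc : 0 < c)
    (μ α : ℝ) (hμ0 : 0 < μ) (hμ1 : μ < 1) (hα : α = 1 - μ)
    (f g : ℝ → ℝ) (hfm : Measurable f) (hgm : Measurable g)
    (hfg : ∀ᵐ t ∂(volume.restrict (Set.Icc 0 T)), 1 / L ≤ f t ∧ f t ≤ g t)
    (hint_f : IntegrableOn f (Set.Icc 0 T))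
    (hint_fα : IntegrableOn (fun t => f t ^ α) (Set.Icc 0 T))
    (hint_r : IntegrableOn (fun t => (g t / f t) ^ (α / μ)) (Set.Icc 0 T))
    (hint_l : IntegrableOn (fun t => ((L * f t) ^ μ * R ^ (-lam)) ^ (α / μ)) (Set.Icc 0 T))
    (havg : (1 / T) * ∫ t in Set.Icc 0 T, f t ≤ c * L⁻¹ * R ^ lam) :
    0 < volume {t ∈ Set.Icc 0 T | (L * f t) ^ μ * R ^ (-lam) ≤ c * g t / f t} := by
  by_contra hpos
  have hS0 : volume {t ∈ Set.Icc 0 T | (L * f t) ^ μ * R ^ (-lam) ≤ c * g t / f t} = 0 :=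
    le_antisymm (not_lt.mp hpos) zero_le
  have hμIcc : volume (Set.Icc (0:ℝ) T) = ENNReal.ofReal T := by
    rw [Real.volume_Icc, sub_zero]
  have hT0 : ENNReal.ofReal T ≠ 0 := by
    simp [ENNReal.ofReal_eq_zero, not_le, hT]
  have hμlttop : volume (Set.Icc (0:ℝ) T) < ⊤ := by
    rw [hμIcc]; exact ENNReal.ofReal_lt_top
  -- the constant lower bound is integrable
  have hconst_int : IntegrableOn (fun _ : ℝ => (1:ℝ)/L) (Set.Icc 0 T) :=
    integrableOn_const hμlttop.ne
  -- upper bound on the integral of f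
  have hIf' : ∫ t in Set.Icc 0 T, f t ≤ T * (c * L⁻¹ * R ^ lam) := by
    have := mul_le_mul_of_nonneg_left havg hT.le
    have hTne : T ≠ 0 := hT.ne'
    calc ∫ t in Set.Icc 0 T, f t = T * ((1/T) * ∫ t in Set.Icc 0 T, f t) := by
          field_simp
      _ ≤ T * (c * L⁻¹ * R ^ lam) := this
  -- Step A : 1 ≤ c * R ^ lam
  have hIf : T * (1/L) ≤ ∫ t in Set.Icc 0 T, f t := by
    have h := integral_mono_ae hconst_int hint_f (hfg.mono fun t ht => ht.1)
    rwa [setIntegral_const, measureReal_def, hμIcc, ENNReal.toReal_ofReal hT.le, smul_eq_mul] at h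
  have hx : 1 ≤ c * R ^ lam := by
    have h1 : T * (1/L) ≤ T * (c * L⁻¹ * R ^ lam) := le_trans hIf hIf'
    have h2 : (1:ℝ)/L ≤ c * L⁻¹ * R ^ lam := le_of_mul_le_mul_left h1 hT
    have h3 := mul_le_mul_of_nonneg_left h2 hL.le
    have hLne : L ≠ 0 := hL.ne'
    calc (1:ℝ) = L * (1/L) := by field_simp
      _ ≤ L * (c * L⁻¹ * R ^ lam) := h3
      _ = c * R ^ lam := by field_simp
  -- the bad inequality holds a.e.
  have hbad : ∀ᵐ t ∂(volume.restrict (Set.Icc 0 T)),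
      ¬ ((L * f t) ^ μ * R ^ (-lam) ≤ c * g t / f t) := by
    have h1 : ∀ᵐ t ∂(volume : Measure ℝ),
        t ∉ {t ∈ Set.Icc 0 T | (L * f t) ^ μ * R ^ (-lam) ≤ c * g t / f t} :=
      measure_eq_zero_iff_ae_notMem.mp hS0
    filter_upwards [ae_restrict_of_ae h1, ae_restrict_mem measurableSet_Icc] with t h1t h2t
    exact fun hP => h1t ⟨h2t, hP⟩
  -- pointwise strict lower bound a.e.
  have hlow : ∀ᵐ t ∂(volume.restrict (Set.Icc 0 T)), c * L⁻¹ * R ^ lam < f t := by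
    filter_upwards [hfg, hbad] with t ht hnb
    obtain ⟨hf1, hfg'⟩ := ht
    have hf0 : 0 < f t := lt_of_lt_of_le (by positivity) hf1
    have hc1 : c ≤ c * g t / f t := by
      rw [mul_div_assoc]
      nth_rewrite 1 [← mul_one c]
      exact mul_le_mul_of_nonneg_left ((one_le_div hf0).mpr hfg') hc.le
    have h3 : c < (L * f t) ^ μ * R ^ (-lam) := lt_of_le_of_lt hc1 (lt_of_not_ge hnb)
    have hRl : 0 < R ^ lam := Real.rpow_pos_of_pos hR lam
    have h4 : c * R ^ lam < (L * f t) ^ μ := by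
      have h5 := mul_lt_mul_of_pos_right h3 hRl
      rwa [mul_assoc, ← Real.rpow_add hR, neg_add_cancel, Real.rpow_zero, mul_one] at h5
    have hLf0 : 0 < L * f t := by positivity
    have hLf1 : 1 ≤ L * f t := by
      by_contra hcon
      push_neg at hcon
      have := Real.rpow_le_one hLf0.le hcon.le hμ0.le
      linarith [lt_of_le_of_lt hx h4]
    have h5 : (L * f t) ^ μ ≤ L * f t := by
      calc (L * f t) ^ μ ≤ (L * f t) ^ (1:ℝ) :=
            Real.rpow_le_rpow_of_exponent_le hLf1 hμ1.le
        _ = L * f t := Real.rpow_one _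
    have h6 : c * R ^ lam < L * f t := lt_of_lt_of_le h4 h5
    have hLinv : (0:ℝ) < L⁻¹ := by positivity
    have hLne : L ≠ 0 := hL.ne'
    calc c * L⁻¹ * R ^ lam = (c * R ^ lam) * L⁻¹ := by ring
      _ < (L * f t) * L⁻¹ := mul_lt_mul_of_pos_right h6 hLinv
      _ = f t := by field_simp
  -- integrate the strict inequality
  set b := c * L⁻¹ * R ^ lam with hb
  have hbint : IntegrableOn (fun _ : ℝ => b) (Set.Icc 0 T) :=
    integrableOn_const hμlttop.ne
  have hhint : IntegrableOn (fun t => f t - b) (Set.Icc 0 T) := hint_f.sub hbint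
  have hnn : 0 ≤ᵐ[volume.restrict (Set.Icc 0 T)] (fun t => f t - b) :=
    hlow.mono fun t ht => by simp only [Pi.zero_apply]; linarith
  have hIh : 0 < ∫ t in Set.Icc 0 T, (f t - b) := by
    rcases lt_or_eq_of_le (integral_nonneg_of_ae hnn) with h | h
    · exact h
    · exfalso
      have hz : (fun t => f t - b) =ᵐ[volume.restrict (Set.Icc 0 T)] 0 :=
        (integral_eq_zero_iff_of_nonneg_ae hnn hhint).mp h.symm
      have hfalse : ∀ᵐ t ∂(volume.restrict (Set.Icc 0 T)), False := by
        filter_upwards [hz, hlow] with t h1 h2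
        simp only [Pi.zero_apply] at h1
        linarith
      rw [ae_iff] at hfalse
      simp only [not_false_eq_true, Set.setOf_true] at hfalse
      rw [Measure.restrict_apply_univ, hμIcc] at hfalse
      exact hT0 hfalse
  have hsplit : ∫ t in Set.Icc 0 T, (f t - b) = (∫ t in Set.Icc 0 T, f t) - T * b := by
    rw [integral_sub hint_f hbint, setIntegral_const, measureReal_def, hμIcc,
      ENNReal.toReal_ofReal hT.le, smul_eq_mul]
  rw [hsplit] at hIh
  linarith
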